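/- Let R be a commutative ring, D : R → R a derivation, W ∈ R, Q a k×k matrix over R with Q² = W · Id_k, and Q' an m×m matrix over R with Q'² = W · Id_m. If an m×k matrix f over R satisfies Q'·f = f·Q (i.e. f is a closed morphism from (R^k, Q) to (R^m, Q')), then D(W)·f is exact: D(W)·f = Q'·(f·D(Q)) + (f·D(Q))·Q. Consequently the Jacobian ring of W acts on the cohomology of morphism spaces between ungraded matrix factorizations of W. -/

import Mathlib

/-- Let `R` be a commutative ring, `D : R → R` a derivation, `W ∈ R`,
`Q` a `k×k` matrix with `Q² = W·Id` and `Q'` an `m×m` matrix with `Q'² = W·Id`. If an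
`m×k` matrix `f` satisfies `Q'·f = f·Q` (a closed morphism from `(R^k, Q)` to
`(R^m, Q')`), then `D(W)·f` is exact: `D(W)·f = Q'·(f·D(Q)) + (f·D(Q))·Q`.
Consequently the Jacobian ring of `W` acts on the cohomology of morphism spaces
between ungraded matrix factorizations of `W`. -/
theorem jacobian_acts_on_morphisms {R : Type*} [CommRing R]
    (D : R → R)
    (hadd : ∀ a b : R, D (a + b) = D a + D b)
    (hLeibniz : ∀ a b : R, D (a * b) = a * D b + D a * b)
    {k m : ℕ} (W : R)
    (Q : Matrix (Fin k) (Fin k) R) (hQ : Q * Q = W • (1 : Matrix (Fin k) (Fin k) R))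
    (Q' : Matrix (Fin m) (Fin m) R) (hQ' : Q' * Q' = W • (1 : Matrix (Fin m) (Fin m) R))
    (f : Matrix (Fin m) (Fin k) R) (hf : Q' * f = f * Q) :
    D W • f = Q' * (f * Q.map D) + (f * Q.map D) * Q := by
  have h0 : D 0 = 0 := by
    have h := hadd 0 0
    rw [add_zero] at h
    exact (right_eq_add.mp h)
  have h1 : D 1 = 0 := by
    have h := hLeibniz 1 1
    rw [mul_one, one_mul, mul_one] at h
    exact (right_eq_add.mp h)
  let D' : R →+ R := ⟨⟨D, h0⟩, hadd⟩
  -- Leibniz for matrices: (Q*Q).map D = Q * Q.map D + Q.map D * Q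
  have key : (Q * Q).map D = Q * Q.map D + Q.map D * Q := by
    ext i j
    simp only [Matrix.map_apply, Matrix.mul_apply, Matrix.add_apply]
    rw [show D = D' from rfl, map_sum, ← Finset.sum_add_distrib]
    exact Finset.sum_congr rfl fun l _ => hLeibniz _ _
  have key2 : ((W • (1 : Matrix (Fin k) (Fin k) R)).map D) = D W • 1 := by
    ext i j
    by_cases h : i = j <;>
      simp [Matrix.map_apply, Matrix.one_apply, h, h0, h1, hLeibniz W 1]
  have hmain : Q * Q.map D + Q.map D * Q = D W • 1 := by
    rw [← key, hQ, key2]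
  calc D W • f = f * (D W • (1 : Matrix (Fin k) (Fin k) R)) := by
        rw [Matrix.mul_smul, Matrix.mul_one]
    _ = f * (Q * Q.map D) + f * (Q.map D * Q) := by rw [← hmain, Matrix.mul_add]
    _ = Q' * (f * Q.map D) + (f * Q.map D) * Q := by
        rw [← Matrix.mul_assoc, ← hf, Matrix.mul_assoc, Matrix.mul_assoc]
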